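/- arXiv:1104.4389 — 2 statements merged into one kernel-verified Lean document; each statement's English description precedes it below -/
import Mathlib

section
/- Let X and Y be jointly Gaussian, each standard normal, with correlation ρ ∈ (−1, 1). With u_n(y) = y/a_n + b_n where a_n = (2 log n)^{1/2} and b_n = (2 log n)^{1/2} − (1/2)(2 log n)^{-1/2}(log log n + log 4π), then for all y, z ∈ ℝ, lim_{n→∞} n P(X ≥ u_n(y), Y ≥ u_n(z)) = 0. -/
open MeasureTheory ProbabilityTheory Filter Set
open Real
open scoped NNReal ENNReal

lemma aux_gaussian_exp (s : ℝ) :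
    Integrable (fun x => rexp (s * x)) (gaussianReal 0 1) ∧
    ∫ x, rexp (s * x) ∂(gaussianReal 0 1) = rexp (s ^ 2 / 2) := by
  have h1 : gaussianReal 0 1 = volume.withDensity (gaussianPDF 0 1) :=
    gaussianReal_of_var_ne_zero 0 one_ne_zero
  set f : ℝ → ℝ≥0 := fun x => Real.toNNReal (gaussianPDFReal 0 1 x) with hf
  have hfm : Measurable f := (measurable_gaussianPDFReal 0 1).real_toNNReal
  have hpdf : gaussianPDF 0 1 = fun x => ((f x : ℝ≥0) : ℝ≥0∞) := rfl
  set c : ℝ := rexp (s ^ 2 / 2) * (Real.sqrt (2 * π))⁻¹ with hc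
  have keyf : (fun x => f x • rexp (s * x))
      = fun x => c * rexp (-(1/2) * (x - s) ^ 2) := by
    funext x
    have hcoe : ((f x : ℝ≥0) : ℝ) = gaussianPDFReal 0 1 x :=
      Real.coe_toNNReal _ (gaussianPDFReal_nonneg 0 1 x)
    rw [NNReal.smul_def, smul_eq_mul, hcoe, gaussianPDFReal_def]
    push_cast
    rw [mul_one, sub_zero]
    have h2 : rexp (-x ^ 2 / (2*1)) * rexp (s * x)
        = rexp (s ^ 2 / 2) * rexp (-(1/2) * (x - s) ^ 2) := by
      rw [← Real.exp_add, ← Real.exp_add]; congr 1; ring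
    rw [mul_assoc, h2, hc]; ring
  have hint_rhs : Integrable (fun x => c * rexp (-(1/2) * (x - s) ^ 2)) volume :=
    (Integrable.comp_sub_right (integrable_exp_neg_mul_sq (by norm_num : (0:ℝ) < 1/2)) s).const_mul c
  have hI : Integrable (fun x => rexp (s * x)) (gaussianReal 0 1) := by
    rw [h1, hpdf, integrable_withDensity_iff_integrable_smul hfm]
    rw [show (fun x => f x • rexp (s * x)) = _ from keyf]
    exact hint_rhs
  refine ⟨hI, ?_⟩
  rw [h1, hpdf, integral_withDensity_eq_integral_smul hfm, keyf, integral_const_mul,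
    integral_sub_right_eq_self (μ := volume) (fun x => rexp (-(1/2) * x ^ 2)) s,
    integral_gaussian, hc]
  rw [show π / (1/2) = 2 * π by ring]
  have h3 : Real.sqrt (2 * π) ≠ 0 := by
    positivity
  field_simp

lemma aux_pull {Ω : Type*} [MeasurableSpace Ω] (P : Measure Ω)
    (Z : Ω → ℝ) (hZ : Measurable Z) (hg : P.map Z = gaussianReal 0 1) (s : ℝ) :
    Integrable (fun ω => rexp (s * Z ω)) P ∧
    ∫ ω, rexp (s * Z ω) ∂P = rexp (s ^ 2 / 2) := by
  have hsm : AEStronglyMeasurable (fun x => rexp (s * x)) (P.map Z) :=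
    (Real.continuous_exp.comp (continuous_const.mul continuous_id)).aestronglyMeasurable
  constructor
  · have := (integrable_map_measure hsm hZ.aemeasurable).mp
      (by rw [hg]; exact (aux_gaussian_exp s).1)
    exact this
  · have := (integral_map hZ.aemeasurable hsm).symm
    rw [this, hg, (aux_gaussian_exp s).2]

lemma aux_chernoff {Ω : Type*} [MeasurableSpace Ω] (P : Measure Ω) [IsProbabilityMeasure P]
    (Z0 Z1 : Ω → ℝ) (hZ0 : Measurable Z0) (hZ1 : Measurable Z1)
    (hindep : IndepFun Z0 Z1 P)
    (hg0 : P.map Z0 = gaussianReal 0 1) (hg1 : P.map Z1 = gaussianReal 0 1)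
    (a b ε : ℝ) (hε : 0 ≤ ε) (hab : 0 < a ^ 2 + b ^ 2) :
    (P {ω | ε ≤ a * Z0 ω + b * Z1 ω}).toReal
      ≤ rexp (-ε ^ 2 / (2 * (a ^ 2 + b ^ 2))) := by
  set σ2 : ℝ := a ^ 2 + b ^ 2 with hσ2
  set t : ℝ := ε / σ2 with htdef
  have ht : 0 ≤ t := div_nonneg hε hab.le
  set X' : Ω → ℝ := fun ω => a * Z0 ω with hX'
  set Y' : Ω → ℝ := fun ω => b * Z1 ω with hY'
  have hiX : ∀ u : ℝ, Integrable (fun ω => rexp (u * X' ω)) P ∧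
      ∫ ω, rexp (u * X' ω) ∂P = rexp ((u * a) ^ 2 / 2) := by
    intro u
    have h := aux_pull P Z0 hZ0 hg0 (u * a)
    simp only [hX', mul_assoc] at h ⊢
    exact h
  have hiY : ∀ u : ℝ, Integrable (fun ω => rexp (u * Y' ω)) P ∧
      ∫ ω, rexp (u * Y' ω) ∂P = rexp ((u * b) ^ 2 / 2) := by
    intro u
    have h := aux_pull P Z1 hZ1 hg1 (u * b)
    simp only [hY', mul_assoc] at h ⊢
    exact h
  have hindep' : IndepFun X' Y' P :=
    hindep.comp (measurable_const_mul a) (measurable_const_mul b)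
  have hint : Integrable (fun ω => rexp (t * (X' + Y') ω)) P :=
    hindep'.integrable_exp_mul_add (hiX t).1 (hiY t).1
  have hmgf : mgf (X' + Y') P t = rexp ((t * a) ^ 2 / 2) * rexp ((t * b) ^ 2 / 2) := by
    rw [hindep'.mgf_add (hiX t).1.aestronglyMeasurable (hiY t).1.aestronglyMeasurable]
    rw [mgf, mgf, (hiX t).2, (hiY t).2]
  have hch := measure_ge_le_exp_mul_mgf (μ := P) (X := X' + Y') ε ht hint
  have hset : {ω | ε ≤ a * Z0 ω + b * Z1 ω} = {ω | ε ≤ (X' + Y') ω} := rfl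
  rw [hset]
  refine hch.trans ?_
  rw [hmgf, ← Real.exp_add, ← Real.exp_add]
  apply Real.exp_le_exp.mpr
  have : -t * ε + ((t * a) ^ 2 / 2 + (t * b) ^ 2 / 2) = -ε ^ 2 / (2 * σ2) := by
    rw [htdef]
    field_simp
    ring
  rw [this]

private lemma aux_le_of_sq_le_sq {a b : ℝ} (ha : 0 ≤ a) (hb : 0 ≤ b) (h : a ^ 2 ≤ b ^ 2) :
    a ≤ b := by nlinarith [sq_nonneg (a - b), sq_nonneg (a + b)]

set_option maxHeartbeats 1000000 in
/-- Asymptotic independence of bivariate Gaussian extremes: if `(X,Y)` is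
jointly Gaussian with standard normal marginals and correlation `ρ ∈ (−1,1)`
(realized as `X = Z₀`, `Y = ρ Z₀ + √(1−ρ²) Z₁` with `Z₀, Z₁` independent standard
normals), then `n P(X ≥ u_n(y), Y ≥ u_n(z)) → 0`. -/
theorem bivariate_gaussian_joint_tail_negligible
    {Ω : Type*} [MeasurableSpace Ω] (P : Measure Ω) [IsProbabilityMeasure P]
    (ρ : ℝ) (hρ : ρ ∈ Set.Ioo (-1 : ℝ) 1)
    (Z0 Z1 : Ω → ℝ) (hZ0 : Measurable Z0) (hZ1 : Measurable Z1)
    (hindep : IndepFun Z0 Z1 P)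
    (hg0 : P.map Z0 = gaussianReal 0 1) (hg1 : P.map Z1 = gaussianReal 0 1)
    (X Y : Ω → ℝ) (hX : ∀ ω, X ω = Z0 ω)
    (hY : ∀ ω, Y ω = ρ * Z0 ω + Real.sqrt (1 - ρ ^ 2) * Z1 ω)
    (an bn : ℕ → ℝ)
    (han : ∀ n, an n = Real.sqrt (2 * Real.log n))
    (hbn : ∀ n, bn n = Real.sqrt (2 * Real.log n) -
      (1 / 2) * (Real.sqrt (2 * Real.log n))⁻¹ *
        (Real.log (Real.log n) + Real.log (4 * Real.pi)))
    (u : ℕ → ℝ → ℝ) (hu : ∀ n y, u n y = y / an n + bn n)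
    (y z : ℝ) :
    Tendsto (fun n : ℕ =>
        (n : ℝ) * (P {ω | X ω ≥ u n y ∧ Y ω ≥ u n z}).toReal)
      atTop (nhds 0) := by
  obtain ⟨hρ1, hρ2⟩ := hρ
  have h1ρ : (0:ℝ) < 1 + ρ := by linarith
  have h1ρ' : (0:ℝ) < 1 - ρ := by linarith
  set a : ℝ := 1 + ρ with ha
  set b : ℝ := Real.sqrt (1 - ρ ^ 2) with hb
  have h1ρ2 : (0:ℝ) ≤ 1 - ρ ^ 2 := by
    rw [show (1:ℝ) - ρ ^ 2 = (1 - ρ) * (1 + ρ) by ring]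
    exact mul_nonneg h1ρ'.le h1ρ.le
  have hb2 : b ^ 2 = 1 - ρ ^ 2 := Real.sq_sqrt h1ρ2
  have hσ2 : a ^ 2 + b ^ 2 = 2 * (1 + ρ) := by rw [hb2, ha]; ring
  have hab : 0 < a ^ 2 + b ^ 2 := by rw [hσ2]; linarith
  set β : ℝ := (1 - ρ) / (2 * (1 + ρ)) with hβdef
  have hβ : 0 < β := by positivity
  set k : ℝ := (1 - ρ) / 2 with hk
  have hkpos : 0 < k := by positivity
  set C : ℝ := Real.log (4 * π) - (y + z) with hC
  set M : ℝ := max (max 2 (2 / k ^ 2)) (max 625 (C ^ 4)) with hM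
  -- limit of the upper bound
  have hlog : Tendsto (fun n : ℕ => Real.log n) atTop atTop :=
    Real.tendsto_log_atTop.comp tendsto_natCast_atTop_atTop
  have hupper : Tendsto (fun n : ℕ => (rexp (β * Real.log n))⁻¹) atTop (nhds 0) :=
    tendsto_inv_atTop_zero.comp
      (Real.tendsto_exp_atTop.comp (hlog.const_mul_atTop hβ))
  refine tendsto_of_tendsto_of_tendsto_of_le_of_le' tendsto_const_nhds hupper
    (Eventually.of_forall fun n => by positivity) ?_
  filter_upwards [eventually_ge_atTop 1, hlog.eventually_ge_atTop M] with n hn1 hnM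
  set L : ℝ := Real.log n with hLdef
  have hL2 : (2:ℝ) ≤ L := le_trans (le_trans (le_max_left _ _) (le_max_left _ _)) hnM
  have hLk : 2 / k ^ 2 ≤ L := le_trans (le_trans (le_max_right _ _) (le_max_left _ _)) hnM
  have hL625 : (625:ℝ) ≤ L := le_trans (le_trans (le_max_left _ _) (le_max_right _ _)) hnM
  have hLC : C ^ 4 ≤ L := le_trans (le_trans (le_max_right _ _) (le_max_right _ _)) hnM
  have hLpos : (0:ℝ) < L := by linarith
  set s : ℝ := Real.sqrt (2 * L) with hsdef
  have hs2 : s ^ 2 = 2 * L := Real.sq_sqrt (by linarith)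
  have hs0 : 0 ≤ s := Real.sqrt_nonneg _
  have hs_ge2 : 2 ≤ s := aux_le_of_sq_le_sq (by norm_num) hs0 (by rw [hs2]; linarith)
  have hs_pos : 0 < s := by linarith
  set q : ℝ := Real.sqrt L with hqdef
  set r : ℝ := Real.sqrt q with hrdef
  have hq0 : 0 ≤ q := Real.sqrt_nonneg _
  have hr0 : 0 ≤ r := Real.sqrt_nonneg _
  have hq2 : q ^ 2 = L := Real.sq_sqrt hLpos.le
  have hr2 : r ^ 2 = q := Real.sq_sqrt hq0
  have hqpos : 0 < q := Real.sqrt_pos.mpr hLpos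
  have hrpos : 0 < r := Real.sqrt_pos.mpr hqpos
  -- log L ≤ 4 r
  have hlogL : Real.log L ≤ 4 * r := by
    have h1 : Real.log q = Real.log L / 2 := Real.log_sqrt hLpos.le
    have h2 : Real.log r = Real.log q / 2 := Real.log_sqrt hq0
    have h3 : Real.log r ≤ r - 1 := Real.log_le_sub_one_of_pos hrpos
    linarith
  -- 5 ≤ r
  have hr5 : (5:ℝ) ≤ r := by
    have h625 : Real.sqrt (Real.sqrt 625) = 5 := by
      rw [show (625:ℝ) = 25 ^ 2 by norm_num, Real.sqrt_sq (by norm_num : (0:ℝ) ≤ 25),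
        show (25:ℝ) = 5 ^ 2 by norm_num, Real.sqrt_sq (by norm_num : (0:ℝ) ≤ 5)]
    calc (5:ℝ) = Real.sqrt (Real.sqrt 625) := h625.symm
      _ ≤ Real.sqrt (Real.sqrt L) := Real.sqrt_le_sqrt (Real.sqrt_le_sqrt hL625)
      _ = r := rfl
  -- C ≤ r
  have hrC : C ≤ r := by
    have h1 : Real.sqrt (Real.sqrt (C ^ 4)) = |C| := by
      rw [show C ^ 4 = (C ^ 2) ^ 2 by ring, Real.sqrt_sq (sq_nonneg C), Real.sqrt_sq_eq_abs]
    calc C ≤ |C| := le_abs_self C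
      _ = Real.sqrt (Real.sqrt (C ^ 4)) := h1.symm
      _ ≤ Real.sqrt (Real.sqrt L) := Real.sqrt_le_sqrt (Real.sqrt_le_sqrt hLC)
      _ = r := rfl
  -- log L + C ≤ s
  have hlog_small : Real.log L + C ≤ s := by
    have h1 : Real.log L + C ≤ 5 * r := by linarith
    have h2 : 5 * r ≤ r * r := mul_le_mul_of_nonneg_right hr5 hr0
    have h3 : r * r = q := by rw [← hr2]; ring
    have h4 : q ≤ s := by
      rw [hqdef, hsdef]
      exact Real.sqrt_le_sqrt (by linarith)
    linarith
  -- s ≤ k * L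
  have hskL : s ≤ k * L := by
    have h1 : 2 ≤ k ^ 2 * L := by
      rw [div_le_iff₀ (by positivity : (0:ℝ) < k ^ 2)] at hLk
      linarith [hLk]
    have h2 : 2 * L ≤ (k * L) ^ 2 := by
      have h3 := mul_le_mul_of_nonneg_right h1 hLpos.le
      calc 2 * L ≤ k ^ 2 * L * L := h3
        _ = (k * L) ^ 2 := by ring
    calc s = Real.sqrt (2 * L) := rfl
      _ ≤ Real.sqrt ((k * L) ^ 2) := Real.sqrt_le_sqrt h2
      _ = k * L := Real.sqrt_sq (by positivity)
  -- ε and its expansion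
  set ε : ℝ := u n y + u n z with hεdef
  have hε_expand : s * ε = (y + z) + 2 * s ^ 2 - (Real.log L + Real.log (4 * π)) := by
    rw [hεdef, hu, hu, han, hbn, ← hLdef, ← hsdef]
    field_simp
    ring
  have hε_lb : 2 * s - 1 ≤ ε := by
    have h1 : s * (2 * s - 1) ≤ s * ε := by
      rw [hε_expand, show s * (2 * s - 1) = 2 * s ^ 2 - s by ring]
      linarith [hlog_small]
    exact le_of_mul_le_mul_left h1 hs_pos
  have hε_pos : 0 ≤ ε := by linarith
  have hε_sq : 8 * L - 2 * (1 - ρ) * L ≤ ε ^ 2 := by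
    have h1 : (2 * s - 1) ^ 2 ≤ ε ^ 2 := by
      apply pow_le_pow_left₀ (by linarith) hε_lb
    have h2 : (2 * s - 1) ^ 2 = 8 * L - 4 * s + 1 := by
      rw [show (2 * s - 1) ^ 2 = 4 * s ^ 2 - 4 * s + 1 by ring, hs2]; ring
    have h3 : s ≤ (1 - ρ) / 2 * L := by rw [hk] at hskL; exact hskL
    linarith [h1, h2, h3]
  -- set inclusion
  have hsub : {ω | X ω ≥ u n y ∧ Y ω ≥ u n z}
      ⊆ {ω | ε ≤ a * Z0 ω + b * Z1 ω} := by
    intro ω hω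
    obtain ⟨h1, h2⟩ := hω
    rw [hX] at h1
    rw [hY] at h2
    simp only [Set.mem_setOf_eq, ha, hb, hεdef]
    linarith
  have hmeas_le : (P {ω | X ω ≥ u n y ∧ Y ω ≥ u n z}).toReal
      ≤ (P {ω | ε ≤ a * Z0 ω + b * Z1 ω}).toReal :=
    ENNReal.toReal_mono (measure_ne_top _ _) (measure_mono hsub)
  have hcher := aux_chernoff P Z0 Z1 hZ0 hZ1 hindep hg0 hg1 a b ε hε_pos hab
  -- final exponent inequality
  have hexp : L + -ε ^ 2 / (2 * (a ^ 2 + b ^ 2)) ≤ -(β * L) := by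
    rw [hσ2]
    have h2σ : (0:ℝ) < 2 * (2 * (1 + ρ)) := by linarith
    have h1 : -ε ^ 2 / (2 * (2 * (1 + ρ)))
        ≤ (2 * (1 - ρ) * L - 8 * L) / (2 * (2 * (1 + ρ))) :=
      (div_le_div_iff_of_pos_right h2σ).mpr (by linarith [hε_sq])
    have h2 : L + (2 * (1 - ρ) * L - 8 * L) / (2 * (2 * (1 + ρ))) = -(β * L) := by
      rw [hβdef]
      have hne : (1:ℝ) + ρ ≠ 0 := by linarith
      field_simp
      ring
    linarith
  have hnpos : (0:ℝ) < n := by exact_mod_cast Nat.lt_of_lt_of_le Nat.zero_lt_one hn1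
  have hnexp : (n:ℝ) = rexp L := (Real.exp_log hnpos).symm
  calc (n : ℝ) * (P {ω | X ω ≥ u n y ∧ Y ω ≥ u n z}).toReal
      ≤ (n : ℝ) * rexp (-ε ^ 2 / (2 * (a ^ 2 + b ^ 2))) := by
        exact mul_le_mul_of_nonneg_left (hmeas_le.trans hcher) hnpos.le
    _ = rexp (L + -ε ^ 2 / (2 * (a ^ 2 + b ^ 2))) := by rw [hnexp, ← Real.exp_add]
    _ ≤ rexp (-(β * L)) := Real.exp_le_exp.mpr hexp
    _ = (rexp (β * L))⁻¹ := Real.exp_neg _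
end

section
/- Let W be a standard Brownian motion, q : [a,b] → (0,∞) continuously differentiable with q, q^{-1}, q' bounded on [a,b], and let [x_{i-1}, x_i] ⊂ [a,b] with length h = x_i − x_{i−1}. Let φ be C^1 on [x_{i−1}, x_i] with |φ| ≤ C h^{−1/2} and |φ'| ≤ C h^{−3/2}. For x ∈ [x_{i−1}, x_i], define H(x) = q^{-1}(x) ∫_{x_{i-1}}^{x_i} q(u) φ(u) dW(u) − ∫_{x_{i-1}}^{x_i} φ(u) dW(u). Then there is a constant K, depending only on C and the bounds on q, q^{-1}, q', such that almost surely sup_{x ∈ [x_{i−1},x_i]} |H(x)| ≤ K h^{1/2} sup_{u∈[x_{i−1},x_i]} |W(u)|. -/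
open MeasureTheory Set intervalIntegral

/-- The pathwise Wiener integral `∫_c^d f dW` of a `C¹` integrand `f` against a continuous
path `w`, defined through the integration-by-parts formula
`∫_c^d f dW = f(d) w(d) − f(c) w(c) − ∫_c^d f'(u) w(u) du`. -/
noncomputable def wienerIntegralIBP (c d : ℝ) (f : ℝ → ℝ) (w : ℝ → ℝ) : ℝ :=
  f d * w d - f c * w c - ∫ u in c..d, deriv f u * w u

/-- With `q` positive `C¹` with `q, q⁻¹, q'` bounded on `[a,b]`,
`[c,d] ⊆ [a,b]` of length `h`, and `φ` `C¹` with `|φ| ≤ C h^{−1/2}`, `|φ'| ≤ C h^{−3/2}`,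
the process `H(x) = q(x)⁻¹ ∫_c^d q φ dW − ∫_c^d φ dW` satisfies, almost surely,
`sup_{x∈[c,d]} |H(x)| ≤ K h^{1/2} sup_{u∈[c,d]} |W(u)|`, where `K` depends only on `C`
and the bounds on `q`, `q⁻¹`, `q'`. -/
theorem wiener_integral_ratio_bound (C Mq Mqi Mq' : ℝ) (hC : 0 < C)
    (hMq : 0 < Mq) (hMqi : 0 < Mqi) (hMq' : 0 ≤ Mq') :
    ∃ K : ℝ, 0 < K ∧
      ∀ (Ω : Type) (mΩ : MeasurableSpace Ω) (P : Measure Ω),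
        IsProbabilityMeasure P →
      ∀ (W : Ω → ℝ → ℝ), (∀ᵐ ω ∂P, Continuous (W ω)) →
      ∀ (a b : ℝ), a < b →
      ∀ (q : ℝ → ℝ), ContDiff ℝ 1 q →
        (∀ x ∈ Set.Icc a b, 0 < q x) →
        (∀ x ∈ Set.Icc a b, |q x| ≤ Mq) →
        (∀ x ∈ Set.Icc a b, |(q x)⁻¹| ≤ Mqi) →
        (∀ x ∈ Set.Icc a b, |deriv q x| ≤ Mq') →
      ∀ (c d : ℝ), a ≤ c → c < d → d ≤ b →
      ∀ (φ : ℝ → ℝ), ContDiff ℝ 1 φ →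
        (∀ u ∈ Set.Icc c d, |φ u| ≤ C * (d - c) ^ (-(1:ℝ)/2)) →
        (∀ u ∈ Set.Icc c d, |deriv φ u| ≤ C * (d - c) ^ (-(3:ℝ)/2)) →
      ∀ (H : Ω → ℝ → ℝ),
        (∀ ω x, H ω x = (q x)⁻¹ * wienerIntegralIBP c d (fun u => q u * φ u) (W ω)
          - wienerIntegralIBP c d φ (W ω)) →
        ∀ᵐ ω ∂P, ∀ x ∈ Set.Icc c d,
          |H ω x| ≤ K * Real.sqrt (d - c) * ⨆ u : Set.Icc c d, |W ω (u : ℝ)| := by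
  refine ⟨4 * C * Mqi * Mq' + 1, by positivity, ?_⟩
  intro Ω mΩ P hP W hWcont a b hab q hq hqpos hqb hqib hq'b c d hac hcd hdb
    φ hφ hφb hφ'b H hH
  filter_upwards [hWcont] with ω hw
  intro x hx
  set h : ℝ := d - c with hh_def
  have hh : 0 < h := sub_pos.mpr hcd
  have hsub : Set.Icc c d ⊆ Set.Icc a b := Set.Icc_subset_Icc hac hdb
  have hxab : x ∈ Set.Icc a b := hsub hx
  have hqx : q x ≠ 0 := ne_of_gt (hqpos x hxab)
  -- the function g = (q - q x) φ
  set g : ℝ → ℝ := fun u => (q u - q x) * φ u with hg_def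
  have hqdiff : Differentiable ℝ q := hq.differentiable one_ne_zero
  have hφdiff : Differentiable ℝ φ := hφ.differentiable one_ne_zero
  have hderivg : ∀ u, deriv g u = deriv q u * φ u + (q u - q x) * deriv φ u := by
    intro u
    have : HasDerivAt g (deriv q u * φ u + (q u - q x) * deriv φ u) u := by
      exact (((hqdiff u).hasDerivAt.sub_const (q x)).mul (hφdiff u).hasDerivAt)
    exact this.deriv
  have hderivqφ : ∀ u, deriv (fun u => q u * φ u) u
      = deriv q u * φ u + q u * deriv φ u := by
    intro u
    exact ((hqdiff u).hasDerivAt.mul (hφdiff u).hasDerivAt).deriv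
  -- continuity of derivatives
  have hcq' : Continuous (deriv q) := hq.continuous_deriv le_rfl
  have hcφ' : Continuous (deriv φ) := hφ.continuous_deriv le_rfl
  have hcderivqφ : Continuous (fun u => deriv (fun u => q u * φ u) u) := by
    exact ((hcq'.mul hφ.continuous).add (hq.continuous.mul hcφ')).congr
      fun u => (hderivqφ u).symm
  have hint1 : IntervalIntegrable (fun u => deriv (fun u => q u * φ u) u * W ω u)
      volume c d := (hcderivqφ.mul hw).intervalIntegrable c d
  have hint2 : IntervalIntegrable (fun u => deriv φ u * W ω u) volume c d :=
    ((hcφ'.mul hw)).intervalIntegrable c d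
  -- the integral identity
  have hint : (∫ u in c..d, deriv g u * W ω u)
      = (∫ u in c..d, deriv (fun u => q u * φ u) u * W ω u)
        - q x * ∫ u in c..d, deriv φ u * W ω u := by
    rw [← intervalIntegral.integral_const_mul, ← intervalIntegral.integral_sub hint1
      (hint2.const_mul (q x))]
    apply intervalIntegral.integral_congr
    intro u _
    show deriv g u * W ω u
      = deriv (fun u => q u * φ u) u * W ω u - q x * (deriv φ u * W ω u)
    rw [hderivg u, hderivqφ u]
    ring
  have key : H ω x = (q x)⁻¹ * (g d * W ω d - g c * W ω c - ∫ u in c..d, deriv g u * W ω u) := by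
    rw [hH, wienerIntegralIBP, wienerIntegralIBP, hint]
    simp only [hg_def]
    field_simp
    ring
  -- the supremum
  set S : ℝ := ⨆ u : Set.Icc c d, |W ω (u : ℝ)| with hS_def
  have hbdd : BddAbove (Set.range fun u : Set.Icc c d => |W ω (u : ℝ)|) := by
    have him : (fun t => |W ω t|) '' Set.Icc c d
        = Set.range fun u : Set.Icc c d => |W ω (u : ℝ)| := Set.image_eq_range _ _
    rw [← him]
    exact (isCompact_Icc.image_of_continuousOn ((hw.abs).continuousOn)).bddAbove
  have hS : ∀ u ∈ Set.Icc c d, |W ω u| ≤ S := fun u hu => le_ciSup hbdd ⟨u, hu⟩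
  have hS0 : 0 ≤ S := le_trans (abs_nonneg _) (hS c ⟨le_refl c, le_of_lt hcd⟩)
  -- Lipschitz bound for q
  have hqlip : ∀ u ∈ Set.Icc c d, |q u - q x| ≤ Mq' * h := by
    intro u hu
    have := (convex_Icc a b).norm_image_sub_le_of_norm_deriv_le
      (fun y _ => hqdiff y) (fun y hy => by simpa using hq'b y hy) hxab (hsub hu)
    rw [Real.norm_eq_abs, Real.norm_eq_abs] at this
    refine this.trans (mul_le_mul_of_nonneg_left ?_ hMq')
    rw [abs_sub_le_iff]
    constructor <;> [linarith [hu.1, hu.2, hx.1, hx.2]; linarith [hu.1, hu.2, hx.1, hx.2]]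
  -- rpow arithmetic
  set A : ℝ := Real.sqrt h with hA_def
  set B : ℝ := h ^ (-(1:ℝ)/2) with hB_def
  have hA0 : 0 ≤ A := Real.sqrt_nonneg h
  have hB0 : 0 ≤ B := Real.rpow_nonneg hh.le _
  have eAB : h * B = A := by
    rw [hA_def, hB_def, Real.sqrt_eq_rpow,
      show (1:ℝ)/(2:ℝ) = 1 + -(1:ℝ)/2 by norm_num, Real.rpow_add hh, Real.rpow_one]
  have eB3 : h * h ^ (-(3:ℝ)/2) = B := by
    rw [hB_def, show -(1:ℝ)/2 = 1 + -(3:ℝ)/2 by norm_num, Real.rpow_add hh, Real.rpow_one]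
  -- bounds on g at the endpoints
  have hgb : ∀ u ∈ Set.Icc c d, |g u| ≤ Mq' * h * (C * B) := by
    intro u hu
    rw [hg_def, abs_mul]
    exact mul_le_mul (hqlip u hu) (hφb u hu) (abs_nonneg _)
      (by positivity)
  -- bound on the integral
  have hintb : |∫ u in c..d, deriv g u * W ω u|
      ≤ (Mq' * (C * B) + Mq' * h * (C * (h ^ (-(3:ℝ)/2)))) * S * |d - c| := by
    rw [← Real.norm_eq_abs]
    apply intervalIntegral.norm_integral_le_of_norm_le_const
    intro u hu
    rw [Set.uIoc_of_le hcd.le] at hu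
    have hu' : u ∈ Set.Icc c d := ⟨hu.1.le, hu.2⟩
    rw [Real.norm_eq_abs, abs_mul, hderivg u]
    have h1 : |deriv q u * φ u + (q u - q x) * deriv φ u|
        ≤ Mq' * (C * B) + Mq' * h * (C * (h ^ (-(3:ℝ)/2))) := by
      refine (abs_add_le _ _).trans (add_le_add ?_ ?_)
      · rw [abs_mul]
        exact mul_le_mul (hq'b u (hsub hu')) (hφb u hu') (abs_nonneg _) hMq'
      · rw [abs_mul]
        exact mul_le_mul (hqlip u hu') (hφ'b u hu') (abs_nonneg _) (by positivity)
    exact mul_le_mul h1 (hS u hu') (abs_nonneg _) (by positivity)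
  have habs_h : |d - c| = h := abs_of_pos hh
  -- assemble
  rw [key, abs_mul]
  have hWd : |W ω d| ≤ S := hS d ⟨hcd.le, le_refl d⟩
  have hWc : |W ω c| ≤ S := hS c ⟨le_refl c, hcd.le⟩
  have hmain : |g d * W ω d - g c * W ω c - ∫ u in c..d, deriv g u * W ω u|
      ≤ 4 * C * Mq' * A * S := by
    have t1 : |g d * W ω d| ≤ Mq' * h * (C * B) * S := by
      rw [abs_mul]
      exact mul_le_mul (hgb d ⟨hcd.le, le_refl d⟩) hWd (abs_nonneg _) (by positivity)
    have t2 : |g c * W ω c| ≤ Mq' * h * (C * B) * S := by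
      rw [abs_mul]
      exact mul_le_mul (hgb c ⟨le_refl c, hcd.le⟩) hWc (abs_nonneg _) (by positivity)
    have t3 := hintb
    rw [habs_h] at t3
    have expand : |g d * W ω d - g c * W ω c - ∫ u in c..d, deriv g u * W ω u|
        ≤ |g d * W ω d| + |g c * W ω c| + |∫ u in c..d, deriv g u * W ω u| := by
      calc |g d * W ω d - g c * W ω c - ∫ u in c..d, deriv g u * W ω u|
          ≤ |g d * W ω d - g c * W ω c| + |∫ u in c..d, deriv g u * W ω u| :=
            abs_sub _ _
        _ ≤ |g d * W ω d| + |g c * W ω c| + |∫ u in c..d, deriv g u * W ω u| := by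
            gcongr; exact abs_sub _ _
    refine expand.trans ?_
    have hhb : Mq' * h * (C * B) * S = Mq' * C * A * S := by
      rw [show Mq' * h * (C * B) = Mq' * C * (h * B) by ring, eAB]
    have hintb' : (Mq' * (C * B) + Mq' * h * (C * (h ^ (-(3:ℝ)/2)))) * S * h
        = 2 * Mq' * C * A * S := by
      rw [show (Mq' * (C * B) + Mq' * h * (C * (h ^ (-(3:ℝ)/2)))) * S * h
          = Mq' * C * (h * B) * S + Mq' * C * (h * h ^ (-(3:ℝ)/2)) * h * S by ring,
        eAB, eB3, show Mq' * C * B * h * S = Mq' * C * (h * B) * S by ring, eAB]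
      ring
    rw [hhb] at t1 t2
    rw [hintb'] at t3
    linarith
  calc |(q x)⁻¹| * |g d * W ω d - g c * W ω c - ∫ u in c..d, deriv g u * W ω u|
      ≤ Mqi * (4 * C * Mq' * A * S) :=
        mul_le_mul (hqib x hxab) hmain (abs_nonneg _) hMqi.le
    _ ≤ (4 * C * Mqi * Mq' + 1) * A * S := by nlinarith [mul_nonneg hA0 hS0]
    _ = (4 * C * Mqi * Mq' + 1) * Real.sqrt (d - c) * S := by rw [hA_def]
end
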